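/- The set of addable (i+1)-nodes of λ+γ₁+γ₂, where γ₁, γ₂ are addable i-nodes of λ, decomposes as the disjoint union I_{i+1}(λ+γ₁+γ₂) = I_{i+1}(λ) ∪ (I_{i+1}(λ+γ₁) − I_{i+1}(λ)) ∪ (I_{i+1}(λ+γ₂) − I_{i+1}(λ)), i.e., I_{i+1}(λ+γ₁+γ₂) = I_{i+1}(λ) ∪ I_{i+1}(λ+γ₁) ∪ I_{i+1}(λ+γ₂) as sets. -/

import Mathlib

/-- A partition given as a weakly decreasing sequence of row lengths, eventually zero. -/
def IsPartition (f : ℕ → ℕ) : Prop := Antitone f ∧ ∃ N, ∀ m, N ≤ m → f m = 0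

/-- The node `p = (a, b)` (row `a`, column `b`, both 0-indexed) is addable (indent) for `f`. -/
def Addable (f : ℕ → ℕ) (p : ℕ × ℕ) : Prop :=
  p.2 = f p.1 ∧ (p.1 = 0 ∨ p.2 < f (p.1 - 1))

/-- The node `p = (a, b)` is removable for `f`. -/
def Removable (f : ℕ → ℕ) (p : ℕ × ℕ) : Prop :=
  p.2 + 1 = f p.1 ∧ f (p.1 + 1) ≤ p.2

/-- The residue of the node `p = (a, b)` is `b - a (mod n)`. -/
def Res (n : ℕ) (p : ℕ × ℕ) : ZMod n := (p.2 : ZMod n) - (p.1 : ZMod n)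

/-- Add a node in row `p.1`. -/
def addNode (f : ℕ → ℕ) (p : ℕ × ℕ) : ℕ → ℕ := Function.update f p.1 (f p.1 + 1)

/-- Remove a node in row `p.1`. -/
def removeNode (f : ℕ → ℕ) (p : ℕ × ℕ) : ℕ → ℕ := Function.update f p.1 (f p.1 - 1)

/-- `I_i(f)`: the set of addable `i`-nodes of `f`. -/
def AddSet (n : ℕ) (f : ℕ → ℕ) (i : ZMod n) : Set (ℕ × ℕ) :=
  {p | Addable f p ∧ Res n p = i}

/-- `R_i(f)`: the set of removable `i`-nodes of `f`. -/
def RemSet (n : ℕ) (f : ℕ → ℕ) (i : ZMod n) : Set (ℕ × ℕ) :=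
  {p | Removable f p ∧ Res n p = i}

/-- For distinct addable `i`-nodes `γ₁, γ₂` of `λ`:
`I_{i+1}(λ+γ₁+γ₂) = I_{i+1}(λ) ∪ I_{i+1}(λ+γ₁) ∪ I_{i+1}(λ+γ₂)`. -/
theorem addSet_succ_union (n : ℕ) (hn : 3 ≤ n) (lam : ℕ → ℕ)
    (hlam : IsPartition lam) (i : ZMod n) (γ₁ γ₂ : ℕ × ℕ)
    (hγ₁ : Addable lam γ₁) (hγ₁res : Res n γ₁ = i)
    (hγ₂ : Addable lam γ₂) (hγ₂res : Res n γ₂ = i) (hne : γ₁ ≠ γ₂) :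
    AddSet n (addNode (addNode lam γ₁) γ₂) (i + 1) =
      AddSet n lam (i + 1) ∪ AddSet n (addNode lam γ₁) (i + 1) ∪
        AddSet n (addNode lam γ₂) (i + 1) := by
  classical
  obtain ⟨hb1, hc1⟩ := hγ₁
  obtain ⟨hb2, hc2⟩ := hγ₂
  set a₁ := γ₁.1 with ha₁def
  set a₂ := γ₂.1 with ha₂def
  have : NeZero n := ⟨by omega⟩
  have h2 : (2 : ZMod n) ≠ 0 := by
    have : ((2 : ℕ) : ZMod n) ≠ 0 := by
      rw [Ne, ZMod.natCast_eq_zero_iff]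
      intro h; have := Nat.le_of_dvd (by norm_num) h; omega
    simpa using this
  have h1 : (1 : ZMod n) ≠ 0 := by
    have : ((1 : ℕ) : ZMod n) ≠ 0 := by
      rw [Ne, ZMod.natCast_eq_zero_iff]
      intro h; have := Nat.le_of_dvd (by norm_num) h; omega
    simpa using this
  have hrow : a₁ ≠ a₂ := by
    intro h
    apply hne
    have : γ₁.2 = γ₂.2 := by rw [hb1, hb2, h]
    exact Prod.ext h this
  have hr1 : (lam a₁ : ZMod n) - (a₁ : ZMod n) = i := by
    rw [← hγ₁res]; simp [Res, hb1, a₁]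
  have hr2 : (lam a₂ : ZMod n) - (a₂ : ZMod n) = i := by
    rw [← hγ₂res]; simp [Res, hb2, a₂]
  have v1 : ∀ c, addNode lam γ₁ c = if c = a₁ then lam a₁ + 1 else lam c := by
    intro c; simp [addNode, Function.update_apply, hb1, a₁]
  have v2 : ∀ c, addNode lam γ₂ c = if c = a₂ then lam a₂ + 1 else lam c := by
    intro c; simp [addNode, Function.update_apply, hb2, a₂]
  have v12 : ∀ c, addNode (addNode lam γ₁) γ₂ c =
      if c = a₂ then lam a₂ + 1 else if c = a₁ then lam a₁ + 1 else lam c := by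
    intro c
    simp only [addNode, Function.update_apply, v1]
    by_cases h : c = a₂
    · simp [h, if_neg (show γ₂.1 ≠ γ₁.1 from Ne.symm hrow), a₁, a₂]
    · simp [h, show ¬ c = γ₂.1 from h, a₁]
  have mono0 : ∀ c, lam c ≤ addNode (addNode lam γ₁) γ₂ c := by
    intro c; rw [v12]; split_ifs with h h'
    · rw [h]; omega
    · rw [h']; omega
    · exact le_rfl
  have mono1 : ∀ c, addNode lam γ₁ c ≤ addNode (addNode lam γ₁) γ₂ c := by
    intro c
    by_cases h : c = a₂
    · subst h; rw [v12, if_pos rfl, v1, if_neg (Ne.symm hrow)]; omega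
    · rw [v12, if_neg h, v1]
  have mono2 : ∀ c, addNode lam γ₂ c ≤ addNode (addNode lam γ₁) γ₂ c := by
    intro c
    by_cases h : c = a₂
    · subst h; rw [v12, if_pos rfl, v2, if_pos rfl]
    · rw [v12, if_neg h, v2, if_neg h]
      split_ifs with h'
      · rw [h']; omega
      · exact le_rfl
  ext p
  obtain ⟨a, b⟩ := p
  simp only [AddSet, Set.mem_setOf_eq, Set.mem_union, Addable, Res] at *
  constructor
  · rintro ⟨⟨hb, hcond⟩, hres⟩
    by_cases ha2 : a = a₂
    · -- in AddSet (addNode lam γ₂)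
      right
      subst ha2
      rw [v12, if_pos rfl] at hb
      refine ⟨⟨by rw [v2, if_pos rfl]; exact hb, ?_⟩, hres⟩
      by_cases ha0 : a₂ = 0
      · exact Or.inl ha0
      · rcases hcond with h0 | hlt
        · exact Or.inl h0
        · right
          rw [v12] at hlt
          rw [v2, if_neg (by omega)]
          by_cases he : a₂ - 1 = a₂
          · omega
          · rw [if_neg he] at hlt
            by_cases he1 : a₂ - 1 = a₁
            · rw [if_pos he1] at hlt
              -- b ≤ lam a₁, need b < lam a₁; if b = lam a₁ then residue contradiction
              rcases Nat.lt_or_ge b (lam (a₂ - 1)) with h | h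
              · exact h
              · exfalso
                rw [he1] at h
                have hb' : b = lam a₁ := by omega
                have ha' : (a₂ : ℕ) = a₁ + 1 := by omega
                have hbc : ((b : ℕ) : ZMod n) = (lam a₁ : ℕ) := by rw [hb']
                have hac : ((a₂ : ℕ) : ZMod n) = (a₁ : ℕ) + 1 := by rw [ha']; push_cast; ring
                apply h2
                linear_combination hr1 - hres + hbc - hac
            · rwa [if_neg he1] at hlt
    · by_cases ha1 : a = a₁
      · -- in AddSet (addNode lam γ₁)
        left; right
        subst ha1
        rw [v12, if_neg ha2, if_pos rfl] at hb
        refine ⟨⟨by rw [v1, if_pos rfl]; exact hb, ?_⟩, hres⟩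
        by_cases ha0 : a₁ = 0
        · exact Or.inl ha0
        · rcases hcond with h0 | hlt
          · exact Or.inl h0
          · right
            rw [v12] at hlt
            rw [v1, if_neg (by omega)]
            by_cases he2 : a₁ - 1 = a₂
            · rw [if_pos he2] at hlt
              rcases Nat.lt_or_ge b (lam a₂) with h | h
              · rwa [← he2] at h
              · exfalso
                have hb' : b = lam a₂ := by omega
                have ha' : (a₁ : ℕ) = a₂ + 1 := by omega
                have hbc : ((b : ℕ) : ZMod n) = (lam a₂ : ℕ) := by rw [hb']
                have hac : ((a₁ : ℕ) : ZMod n) = (a₂ : ℕ) + 1 := by rw [ha']; push_cast; ring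
                apply h2
                linear_combination hr2 - hres + hbc - hac
            · rw [if_neg he2, if_neg (by omega)] at hlt
              exact hlt
      · -- in AddSet lam
        left; left
        rw [v12, if_neg ha2, if_neg ha1] at hb
        refine ⟨⟨hb, ?_⟩, hres⟩
        rcases hcond with h0 | hlt
        · exact Or.inl h0
        · right
          rw [v12] at hlt
          by_cases he2 : a - 1 = a₂
          · rw [if_pos he2] at hlt
            rcases Nat.lt_or_ge b (lam (a - 1)) with h | h
            · exact h
            · exfalso
              rw [he2] at h
              have hb' : b = lam a₂ := by omega
              have ha' : (a : ℕ) = a₂ + 1 := by omega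
              have hbc : ((b : ℕ) : ZMod n) = (lam a₂ : ℕ) := by rw [hb']
              have hac : ((a : ℕ) : ZMod n) = (a₂ : ℕ) + 1 := by rw [ha']; push_cast; ring
              apply h2
              linear_combination hr2 - hres + hbc - hac
          · rw [if_neg he2] at hlt
            by_cases he1 : a - 1 = a₁
            · rw [if_pos he1] at hlt
              rcases Nat.lt_or_ge b (lam (a - 1)) with h | h
              · exact h
              · exfalso
                rw [he1] at h
                have hb' : b = lam a₁ := by omega
                have ha' : (a : ℕ) = a₁ + 1 := by omega
                have hbc : ((b : ℕ) : ZMod n) = (lam a₁ : ℕ) := by rw [hb']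
                have hac : ((a : ℕ) : ZMod n) = (a₁ : ℕ) + 1 := by rw [ha']; push_cast; ring
                apply h2
                linear_combination hr1 - hres + hbc - hac
            · rwa [if_neg he1] at hlt
  · rintro ((⟨⟨hb, hcond⟩, hres⟩ | ⟨⟨hb, hcond⟩, hres⟩) | ⟨⟨hb, hcond⟩, hres⟩)
    · -- from AddSet lam
      have ha1 : a ≠ a₁ := by
        intro h
        apply h1
        have hbc : ((b : ℕ) : ZMod n) = (lam a₁ : ℕ) := by rw [hb, h]
        have hac : ((a : ℕ) : ZMod n) = (a₁ : ℕ) := by rw [h]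
        linear_combination hr1 - hres + hbc - hac
      have ha2 : a ≠ a₂ := by
        intro h
        apply h1
        have hbc : ((b : ℕ) : ZMod n) = (lam a₂ : ℕ) := by rw [hb, h]
        have hac : ((a : ℕ) : ZMod n) = (a₂ : ℕ) := by rw [h]
        linear_combination hr2 - hres + hbc - hac
      refine ⟨⟨by rw [v12, if_neg ha2, if_neg ha1]; exact hb, ?_⟩, hres⟩
      rcases hcond with h0 | hlt
      · exact Or.inl h0
      · exact Or.inr (hlt.trans_le (mono0 (a - 1)))
    · -- from AddSet (addNode lam γ₁)
      have ha2 : a ≠ a₂ := by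
        intro h
        apply h1
        have hbc : ((b : ℕ) : ZMod n) = (lam a₂ : ℕ) := by
          rw [hb, h, v1, if_neg (Ne.symm hrow)]
        have hac : ((a : ℕ) : ZMod n) = (a₂ : ℕ) := by rw [h]
        linear_combination hr2 - hres + hbc - hac
      refine ⟨⟨?_, ?_⟩, hres⟩
      · rw [hb, v12, if_neg ha2, v1]
      · rcases hcond with h0 | hlt
        · exact Or.inl h0
        · exact Or.inr (hlt.trans_le (mono1 (a - 1)))
    · -- from AddSet (addNode lam γ₂)
      have ha1 : a ≠ a₁ := by
        intro h
        apply h1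
        have hbc : ((b : ℕ) : ZMod n) = (lam a₁ : ℕ) := by
          rw [hb, h, v2, if_neg hrow]
        have hac : ((a : ℕ) : ZMod n) = (a₁ : ℕ) := by rw [h]
        linear_combination hr1 - hres + hbc - hac
      refine ⟨⟨?_, ?_⟩, hres⟩
      · rw [hb, v2, v12]
        by_cases h : a = a₂
        · rw [if_pos h, if_pos h]
        · rw [if_neg h, if_neg h, if_neg ha1]
      · rcases hcond with h0 | hlt
        · exact Or.inl h0
        · exact Or.inr (hlt.trans_le (mono2 (a - 1)))
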